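/- Let A and B be Banach algebras, let A be strong pseudo-amenable, and let T : A → B be a continuous surjective algebra homomorphism. Then B is strong pseudo-amenable. -/

import Mathlib

noncomputable section

open ContinuousLinearMap NormedSpace

/-- A directed index system for nets. -/
structure DirSys : Type 1 where
  ι : Type
  le : ι → ι → Prop
  refl : ∀ i, le i i
  trans : ∀ {i j k}, le i j → le j k → le i k
  nonempty : Nonempty ι
  directed : ∀ i j, ∃ k, le i k ∧ le j k

/-- Convergence of a net indexed by a directed system, in a (pseudo)metric space. -/
def DirSys.Tendsto (D : DirSys) {X : Type*} [PseudoMetricSpace X] (m : D.ι → X) (x : X) : Prop :=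
  ∀ ε : ℝ, 0 < ε → ∃ i, ∀ j, D.le i j → dist (m j) x < ε

variable (A : Type*) [NonUnitalNormedRing A] [NormedSpace ℂ A]
  [IsScalarTower ℂ A A] [SMulCommClass ℂ A A]

/-- The continuous bilinear forms on `A`, i.e. the dual space of the projective tensor
product `A ⊗̂ A`. -/
abbrev BilForms := A →L[ℂ] StrongDual ℂ A

/-- The bidual `(A ⊗̂ A)**` of the projective tensor product, realized concretely as the
dual space of the space of continuous bilinear forms on `A` (the latter being canonically,
isometrically, the dual of `A ⊗̂ A`). -/
abbrev TensorBidual := StrongDual ℂ (BilForms A)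

instance : NormedAddCommGroup (TensorBidual A) :=
  ContinuousLinearMap.toNormedAddCommGroup (E := BilForms A) (F := ℂ) (σ₁₂ := RingHom.id ℂ)

instance : NormedSpace ℂ (TensorBidual A) :=
  ContinuousLinearMap.toNormedSpace (E := BilForms A) (F := ℂ) (σ₁₂ := RingHom.id ℂ) (𝕜' := ℂ)

/-- The bidual `A**` of `A`. -/
abbrev Bidual := StrongDual ℂ (StrongDual ℂ A)

variable {A}

/-- The elementary tensor `x ⊗ y`, viewed inside `(A ⊗̂ A)**` via the canonical isometric
embedding of `A ⊗̂ A` into its bidual. -/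
def elemT (x y : A) : TensorBidual A :=
  (ContinuousLinearMap.apply ℂ ℂ y).comp (ContinuousLinearMap.apply ℂ (StrongDual ℂ A) x)

variable (A)

/-- The canonical isometric copy of `A ⊗̂ A` inside its bidual: the closure of the linear
span of the elementary tensors. -/
def ptp : Submodule ℂ (TensorBidual A) :=
  (Submodule.span ℂ {m : TensorBidual A | ∃ x y : A, m = elemT x y}).topologicalClosure

/-- The map `f ↦ f·a` on bilinear forms, `(f·a)(x,y) = f(ax, y)`; predual of the left
module action of `A` on `(A ⊗̂ A)**`. -/
def leftBil (a : A) : BilForms A →L[ℂ] BilForms A :=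
  (compL ℂ A A (StrongDual ℂ A)).flip (ContinuousLinearMap.mul ℂ A a)

/-- The map `f ↦ a·f` on bilinear forms, `(a·f)(x,y) = f(x, ya)`; predual of the right
module action of `A` on `(A ⊗̂ A)**`. -/
def rightBil (a : A) : BilForms A →L[ℂ] BilForms A :=
  compL ℂ A (StrongDual ℂ A) (StrongDual ℂ A)
    ((compL ℂ A A ℂ).flip ((ContinuousLinearMap.mul ℂ A).flip a))

variable {A}

/-- The left module action `a · m` of `A` on `(A ⊗̂ A)**`, extending
`a · (x ⊗ y) = (a x) ⊗ y`. -/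
def tsmulL (a : A) (m : TensorBidual A) : TensorBidual A := m.comp (leftBil A a)

/-- The right module action `m · a` of `A` on `(A ⊗̂ A)**`, extending
`(x ⊗ y) · a = x ⊗ (y a)`. -/
def tsmulR (a : A) (m : TensorBidual A) : TensorBidual A := m.comp (rightBil A a)

variable (A)

/-- The adjoint `π_A* : A* → (A ⊗̂ A)*` of the product morphism `π_A`, namely
`(π_A* f)(x, y) = f (x y)`. -/
def piStar : StrongDual ℂ A →L[ℂ] BilForms A :=
  ((compL ℂ A (A →L[ℂ] A) (StrongDual ℂ A)).flip (ContinuousLinearMap.mul ℂ A)).comp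
    (compL ℂ A A ℂ)

variable {A}

/-- The second adjoint `π_A** : (A ⊗̂ A)** → A**` of the product morphism. -/
def piSS (m : TensorBidual A) : Bidual A := m.comp (piStar A)

variable (A)

/-- The map `f ↦ f·a` on `A*`, `(f·a)(x) = f(ax)`. -/
def dualROp (a : A) : StrongDual ℂ A →L[ℂ] StrongDual ℂ A :=
  (compL ℂ A A ℂ).flip (ContinuousLinearMap.mul ℂ A a)

/-- The map `f ↦ a·f` on `A*`, `(a·f)(x) = f(xa)`. -/
def dualLOp (a : A) : StrongDual ℂ A →L[ℂ] StrongDual ℂ A :=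
  (compL ℂ A A ℂ).flip ((ContinuousLinearMap.mul ℂ A).flip a)

variable {A}

/-- The product `a · Φ` of `a ∈ A` and `Φ ∈ A**`: `(a·Φ)(f) = Φ(f·a)`. -/
def bsmulL (a : A) (Φ : Bidual A) : Bidual A := Φ.comp (dualROp A a)

/-- The product `Φ · a` of `Φ ∈ A**` and `a ∈ A`: `(Φ·a)(f) = Φ(a·f)`. -/
def bsmulR (a : A) (Φ : Bidual A) : Bidual A := Φ.comp (dualLOp A a)

/-- The canonical isometric embedding of `A` into its bidual. -/
def inclB (a : A) : Bidual A := NormedSpace.inclusionInDoubleDual ℂ A a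

variable (A)

/-- A Banach algebra `A` is *strong pseudo-amenable* if there is a (not necessarily bounded)
net `(m_α)` in `(A ⊗̂ A)**` such that `a·m_α − m_α·a → 0` and
`a·π_A**(m_α) = π_A**(m_α)·a → a` for every `a ∈ A`. -/
def StrongPseudoAmenable : Prop :=
  ∃ (D : DirSys) (m : D.ι → TensorBidual A),
    (∀ a : A, D.Tendsto (fun α => tsmulL a (m α) - tsmulR a (m α)) 0) ∧
    (∀ (a : A) (α : D.ι), bsmulL a (piSS (m α)) = bsmulR a (piSS (m α))) ∧
    (∀ a : A, D.Tendsto (fun α => bsmulR a (piSS (m α))) (inclB a))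

/-- A Banach algebra `A` is *pseudo-amenable* if there is a (not necessarily bounded)
net `(m_α)` in `A ⊗̂ A` such that `a·m_α − m_α·a → 0` and `π_A(m_α)a → a` for every `a ∈ A`. -/
def PseudoAmenable : Prop :=
  ∃ (D : DirSys) (m : D.ι → TensorBidual A),
    (∀ α, m α ∈ ptp A) ∧
    (∀ a : A, D.Tendsto (fun α => tsmulL a (m α) - tsmulR a (m α)) 0) ∧
    (∀ a : A, D.Tendsto (fun α => bsmulR a (piSS (m α))) (inclB a))

/-- A Banach algebra `A` is *pseudo-contractible* if there is a net `(m_α)` in `A ⊗̂ A`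
such that `a·m_α = m_α·a` and `π_A(m_α)a → a` for every `a ∈ A`. -/
def PseudoContractible : Prop :=
  ∃ (D : DirSys) (m : D.ι → TensorBidual A),
    (∀ α, m α ∈ ptp A) ∧
    (∀ (a : A) (α : D.ι), tsmulL a (m α) = tsmulR a (m α)) ∧
    (∀ a : A, D.Tendsto (fun α => bsmulR a (piSS (m α))) (inclB a))

/-- A Banach algebra `A` is *amenable* if it has a bounded approximate diagonal: a bounded
net `(m_α)` in `A ⊗̂ A` such that `a·m_α − m_α·a → 0` and `π_A(m_α)a → a` for every `a ∈ A`. -/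
def AmenableBanachAlgebra : Prop :=
  ∃ (D : DirSys) (m : D.ι → TensorBidual A) (C : ℝ),
    (∀ α, m α ∈ ptp A) ∧
    (∀ α, ‖m α‖ ≤ C) ∧
    (∀ a : A, D.Tendsto (fun α => tsmulL a (m α) - tsmulR a (m α)) 0) ∧
    (∀ a : A, D.Tendsto (fun α => bsmulR a (piSS (m α))) (inclB a))

end

set_option linter.unusedSectionVars false

-- ===== auxiliary development =====
noncomputable section AuxSPA
open ContinuousLinearMap NormedSpace

lemma dirsys_tendsto_comp (D : DirSys) {E F G : Type*}
    [SeminormedAddCommGroup E] [NormedSpace ℂ E] [SeminormedAddCommGroup F] [NormedSpace ℂ F]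
    [SeminormedAddCommGroup G] [NormedSpace ℂ G]
    (x : D.ι → F →L[ℂ] G) (L : F →L[ℂ] G) (hx : D.Tendsto x L) (Φ : E →L[ℂ] F) :
    D.Tendsto (fun α => (x α).comp Φ) (L.comp Φ) := by
  intro ε hε
  obtain ⟨i, hi⟩ := hx (ε / (‖Φ‖ + 1)) (by positivity)
  refine ⟨i, fun j hj => ?_⟩
  have h1 : ‖x j - L‖ < ε / (‖Φ‖ + 1) := by
    have := hi j hj; rwa [dist_eq_norm] at this
  rw [dist_eq_norm, ← ContinuousLinearMap.sub_comp]
  calc ‖(x j - L).comp Φ‖ ≤ ‖x j - L‖ * ‖Φ‖ := ContinuousLinearMap.opNorm_comp_le _ _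
    _ ≤ ‖x j - L‖ * (‖Φ‖ + 1) := by nlinarith [norm_nonneg (x j - L), norm_nonneg Φ]
    _ < (ε / (‖Φ‖ + 1)) * (‖Φ‖ + 1) := mul_lt_mul_of_pos_right h1 (by positivity)
    _ = ε := div_mul_cancel₀ _ (by positivity)

variable {A : Type} [NonUnitalNormedRing A] [NormedSpace ℂ A] [IsScalarTower ℂ A A]
  [SMulCommClass ℂ A A]
variable {B : Type} [NonUnitalNormedRing B] [NormedSpace ℂ B] [IsScalarTower ℂ B B]
  [SMulCommClass ℂ B B]

/-- The adjoint `T* : B* → A*` of `T`. -/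
def tstarCLM (T' : A →L[ℂ] B) : StrongDual ℂ B →L[ℂ] StrongDual ℂ A :=
  (compL ℂ A B ℂ).flip T'

@[simp] lemma tstarCLM_apply (T' : A →L[ℂ] B) (g : StrongDual ℂ B) (x : A) :
    tstarCLM T' g x = g (T' x) := by
  simp [tstarCLM, compL_apply]

/-- Pullback of bilinear forms along `T`: the adjoint `(T ⊗ T)*`. -/
def bilPull (T' : A →L[ℂ] B) : BilForms B →L[ℂ] BilForms A :=
  (compL ℂ A (StrongDual ℂ B) (StrongDual ℂ A) (tstarCLM T')).comp
    ((compL ℂ A B (StrongDual ℂ B)).flip T')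

@[simp] lemma bilPull_apply (T' : A →L[ℂ] B) (f : BilForms B) (x y : A) :
    bilPull T' f x y = f (T' x) (T' y) := by
  simp [bilPull, compL_apply]

@[simp] lemma leftBil_apply (a : A) (f : BilForms A) (x y : A) :
    leftBil A a f x y = f (a * x) y := by
  simp [leftBil, compL_apply, flip_apply]

@[simp] lemma rightBil_apply (a : A) (f : BilForms A) (x y : A) :
    rightBil A a f x y = f x (y * a) := by
  simp [rightBil, compL_apply, flip_apply]

@[simp] lemma piStar_apply (g : StrongDual ℂ A) (x y : A) :
    piStar A g x y = g (x * y) := by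
  simp [piStar, compL_apply, flip_apply]

@[simp] lemma dualROp_apply (a : A) (g : StrongDual ℂ A) (x : A) :
    dualROp A a g x = g (a * x) := by
  simp [dualROp, compL_apply, flip_apply]

@[simp] lemma dualLOp_apply (a : A) (g : StrongDual ℂ A) (x : A) :
    dualLOp A a g x = g (x * a) := by
  simp [dualLOp, compL_apply, flip_apply]

end AuxSPA

noncomputable section AuxSPA2
open ContinuousLinearMap NormedSpace

variable {A : Type} [NonUnitalNormedRing A] [NormedSpace ℂ A] [IsScalarTower ℂ A A]
  [SMulCommClass ℂ A A]
variable {B : Type} [NonUnitalNormedRing B] [NormedSpace ℂ B] [IsScalarTower ℂ B B]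
  [SMulCommClass ℂ B B]
variable (T' : A →L[ℂ] B) (hT : ∀ x y : A, T' (x * y) = T' x * T' y)

include hT

lemma key_left (a : A) (f : BilForms B) :
    bilPull T' (leftBil B (T' a) f) = leftBil A a (bilPull T' f) := by
  refine ContinuousLinearMap.ext fun x => ContinuousLinearMap.ext fun y => ?_
  simp only [bilPull_apply, leftBil_apply]
  rw [hT]

lemma key_right (a : A) (f : BilForms B) :
    bilPull T' (rightBil B (T' a) f) = rightBil A a (bilPull T' f) := by
  refine ContinuousLinearMap.ext fun x => ContinuousLinearMap.ext fun y => ?_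
  simp only [bilPull_apply, rightBil_apply]
  rw [hT]

lemma key_pi (g : StrongDual ℂ B) :
    bilPull T' (piStar B g) = piStar A (tstarCLM T' g) := by
  refine ContinuousLinearMap.ext fun x => ContinuousLinearMap.ext fun y => ?_
  simp only [bilPull_apply, piStar_apply, tstarCLM_apply]
  rw [hT]

lemma key_dR (a : A) (g : StrongDual ℂ B) :
    tstarCLM T' (dualROp B (T' a) g) = dualROp A a (tstarCLM T' g) := by
  refine ContinuousLinearMap.ext fun x => ?_
  simp only [tstarCLM_apply, dualROp_apply]
  rw [hT]

lemma key_dL (a : A) (g : StrongDual ℂ B) :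
    tstarCLM T' (dualLOp B (T' a) g) = dualLOp A a (tstarCLM T' g) := by
  refine ContinuousLinearMap.ext fun x => ?_
  simp only [tstarCLM_apply, dualLOp_apply]
  rw [hT]

lemma key_tsmulL (a : A) (m : TensorBidual A) :
    tsmulL (T' a) (m.comp (bilPull T')) = (tsmulL a m).comp (bilPull T') := by
  refine ContinuousLinearMap.ext fun f => ?_
  simp only [tsmulL, ContinuousLinearMap.comp_apply]
  rw [key_left T' hT]

lemma key_tsmulR (a : A) (m : TensorBidual A) :
    tsmulR (T' a) (m.comp (bilPull T')) = (tsmulR a m).comp (bilPull T') := by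
  refine ContinuousLinearMap.ext fun f => ?_
  simp only [tsmulR, ContinuousLinearMap.comp_apply]
  rw [key_right T' hT]

lemma key_piSS (m : TensorBidual A) :
    piSS (m.comp (bilPull T')) = (piSS m).comp (tstarCLM T') := by
  refine ContinuousLinearMap.ext fun g => ?_
  simp only [piSS, ContinuousLinearMap.comp_apply]
  rw [key_pi T' hT]

lemma key_bsmulL (a : A) (Ψ : Bidual A) :
    bsmulL (T' a) (Ψ.comp (tstarCLM T')) = (bsmulL a Ψ).comp (tstarCLM T') := by
  refine ContinuousLinearMap.ext fun g => ?_
  simp only [bsmulL, ContinuousLinearMap.comp_apply]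
  rw [key_dR T' hT]

lemma key_bsmulR (a : A) (Ψ : Bidual A) :
    bsmulR (T' a) (Ψ.comp (tstarCLM T')) = (bsmulR a Ψ).comp (tstarCLM T') := by
  refine ContinuousLinearMap.ext fun g => ?_
  simp only [bsmulR, ContinuousLinearMap.comp_apply]
  rw [key_dL T' hT]

omit hT

lemma key_inclB (a : A) : inclB (T' a) = (inclB a).comp (tstarCLM T') := by
  refine ContinuousLinearMap.ext fun g => ?_
  simp only [inclB, ContinuousLinearMap.comp_apply, NormedSpace.dual_def, tstarCLM_apply]

end AuxSPA2




set_option maxHeartbeats 1000000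

/-- Let `A` and `B` be Banach algebras, `A` strong pseudo-amenable, and
`T : A → B` a continuous surjective algebra homomorphism. Then `B` is strong
pseudo-amenable. -/
theorem strongPseudoAmenable_of_epimorphism
    (A : Type) [NonUnitalNormedRing A] [NormedSpace ℂ A] [IsScalarTower ℂ A A]
    [SMulCommClass ℂ A A] [CompleteSpace A]
    (B : Type) [NonUnitalNormedRing B] [NormedSpace ℂ B] [IsScalarTower ℂ B B]
    [SMulCommClass ℂ B B] [CompleteSpace B]
    (hA : StrongPseudoAmenable A)
    (T : A → B) (hlin : IsLinearMap ℂ T) (hcont : Continuous T)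
    (hmul : ∀ x y : A, T (x * y) = T x * T y) (hsurj : Function.Surjective T) :
    StrongPseudoAmenable B := by
  obtain ⟨D, m, hdiag, heqn, happ⟩ := hA
  let T' : A →L[ℂ] B := { toLinearMap := IsLinearMap.mk' T hlin, cont := hcont }
  have hT : ∀ x y : A, T' (x * y) = T' x * T' y := hmul
  have hsurj' : Function.Surjective T' := hsurj
  clear_value T'
  clear hmul hsurj hcont hlin
  refine ⟨D, fun α => (m α).comp (bilPull T'), ?_, ?_, ?_⟩
  · intro b
    obtain ⟨a, rfl⟩ := hsurj' b
    have hfun : (fun α => tsmulL (T' a) ((m α).comp (bilPull T'))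
          - tsmulR (T' a) ((m α).comp (bilPull T')))
        = fun α => (tsmulL a (m α) - tsmulR a (m α)).comp (bilPull T') := by
      funext α
      rw [key_tsmulL T' hT, key_tsmulR T' hT]; ext f; rfl
    rw [hfun]
    have := dirsys_tendsto_comp D (E := BilForms B) _ _ (hdiag a) (bilPull T')
    rwa [ContinuousLinearMap.zero_comp] at this
  · intro b α
    obtain ⟨a, rfl⟩ := hsurj' b
    rw [key_piSS T' hT, key_bsmulL T' hT, key_bsmulR T' hT, heqn a α]
  · intro b
    obtain ⟨a, rfl⟩ := hsurj' b
    have hfun : (fun α => bsmulR (T' a) (piSS ((m α).comp (bilPull T'))))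
        = fun α => (bsmulR a (piSS (m α))).comp (tstarCLM T') := by
      funext α
      rw [key_piSS T' hT, key_bsmulR T' hT]
    rw [hfun, key_inclB]
    exact dirsys_tendsto_comp D _ _ (happ a) (tstarCLM T')
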